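/- Let n ≥ 2, let E be the set of unordered pairs {i,j} of distinct elements of {1,…,n}, and fix a pair {k,l} ∈ E. Let q ∈ ℝ with q ≠ 1 and θ : {1,…,n} → ℝ be such that 1 − (q−1)(θ_k + θ_l) > 0 and such that for every configuration a : E → {0,1} one has 1 + (q−1) ∑_{{i,j}∈E} (θ_i + θ_j) a({i,j}) > 0. Then ∑_{a : E→{0,1}, a({k,l})=1} exp_{2−q}( − ∑_{{i,j}∈E} (θ_i+θ_j) a({i,j}) ) = exp_{2−q}(−(θ_k+θ_l)) · ∑_{a′ : (E∖{{k,l}})→{0,1}} exp_{2−q}( − ∑_{{i,j}∈E, {i,j}≠{k,l}} ((θ_i+θ_j)/(1 − (q−1)(θ_k+θ_l))) · a′({i,j}) ). -/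

import Mathlib

open Finset

/-- The deformed exponential `exp_{2-q}(x) = (1 + (q-1)x)^(1/(q-1))`. -/
noncomputable def qexp2q (q x : ℝ) : ℝ := (1 + (q - 1) * x) ^ ((1 : ℝ) / (q - 1))

/-- The set of unordered pairs of distinct elements of `{1,…,n}`, encoded as
ordered pairs `(i,j)` with `i < j`. -/
abbrev Epairs (n : ℕ) := {p : Fin n × Fin n // p.1 < p.2}

lemma mul_rpow_pos_left {D : ℝ} (hD : 0 < D) (X r : ℝ) :
    (D * X) ^ r = D ^ r * X ^ r := by
  rcases lt_trichotomy X 0 with hX | hX | hX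
  · have hDX : D * X < 0 := mul_neg_of_pos_of_neg hD hX
    rw [Real.rpow_def_of_neg hDX, Real.rpow_def_of_neg hX, Real.rpow_def_of_pos hD,
      Real.log_mul hD.ne' hX.ne, add_mul, Real.exp_add]
    ring
  · subst hX
    by_cases hr : r = 0
    · simp [hr]
    · simp [Real.zero_rpow hr]
  · exact Real.mul_rpow hD.le hX.le

/-- Marginal link probability numerator in the `q`-exponential configuration model:
summing the weights `exp_{2-q}(-∑ (θ_i+θ_j) a_{ij})` over configurations with
`a_{kl} = 1` yields `exp_{2-q}(-(θ_k+θ_l))` times the reduced partition function with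
rescaled multipliers `(θ_i+θ_j)/(1-(q-1)(θ_k+θ_l))` over the remaining pairs. -/
theorem qCM_marginal_numerator (n : ℕ) (hn : 2 ≤ n) (q : ℝ) (hq : q ≠ 1)
    (θ : Fin n → ℝ) (k l : Fin n) (hkl : k < l)
    (hD : 0 < 1 - (q - 1) * (θ k + θ l))
    (hpos : ∀ a : Epairs n → Bool,
      0 < 1 + (q - 1) *
        ∑ e : Epairs n, (θ e.1.1 + θ e.1.2) * (if a e then (1 : ℝ) else 0)) :
    ∑ a ∈ Finset.univ.filter (fun a : Epairs n → Bool => a ⟨(k, l), hkl⟩ = true),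
        qexp2q q (-(∑ e : Epairs n, (θ e.1.1 + θ e.1.2) * (if a e then (1 : ℝ) else 0)))
      = qexp2q q (-(θ k + θ l)) *
        ∑ a' : {e : Epairs n // e ≠ ⟨(k, l), hkl⟩} → Bool,
          qexp2q q (-(∑ e : {e : Epairs n // e ≠ ⟨(k, l), hkl⟩},
            ((θ e.1.1.1 + θ e.1.1.2) / (1 - (q - 1) * (θ k + θ l))) *
              (if a' e then (1 : ℝ) else 0))) := by
  classical
  set e0 : Epairs n := ⟨(k, l), hkl⟩ with he0
  set t : ℝ := θ k + θ l with ht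
  set D : ℝ := 1 - (q - 1) * t with hDdef
  set w : Epairs n → ℝ := fun e => θ e.1.1 + θ e.1.2 with hw
  have hDne : D ≠ 0 := ne_of_gt hD
  -- algebraic factorization
  have core : ∀ S : ℝ, qexp2q q (-(t + S)) = qexp2q q (-t) * qexp2q q (-(S / D)) := by
    intro S
    unfold qexp2q
    have h1 : 1 + (q - 1) * (-(t + S)) = D * (1 + (q - 1) * (-(S / D))) := by
      field_simp
      ring
    have h2 : 1 + (q - 1) * (-t) = D := by rw [hDdef]; ring
    rw [h1, mul_rpow_pos_left hD, h2]
  -- pointwise identity for configurations with a e0 = true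
  have main : ∀ a : Epairs n → Bool, a e0 = true →
      qexp2q q (-(∑ e : Epairs n, w e * (if a e then (1 : ℝ) else 0)))
        = qexp2q q (-t) * qexp2q q (-(∑ e : {e : Epairs n // e ≠ e0},
            (w e.1 / D) * (if a e.1 then (1 : ℝ) else 0))) := by
    intro a ha
    have hsplit : ∑ e : Epairs n, w e * (if a e then (1 : ℝ) else 0)
        = t + ∑ e ∈ Finset.univ.erase e0, w e * (if a e then (1 : ℝ) else 0) := by
      rw [← Finset.add_sum_erase _ _ (Finset.mem_univ e0), ha]
      simp [he0, hw, ht]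
    have hsub : ∑ e ∈ Finset.univ.erase e0, w e * (if a e then (1 : ℝ) else 0)
        = ∑ e : {e : Epairs n // e ≠ e0}, w e.1 * (if a e.1 then (1 : ℝ) else 0) := by
      exact Finset.sum_subtype _ (fun x => by simp) _
    have hdiv : ∑ e : {e : Epairs n // e ≠ e0},
          (w e.1 / D) * (if a e.1 then (1 : ℝ) else 0)
        = (∑ e : {e : Epairs n // e ≠ e0}, w e.1 * (if a e.1 then (1 : ℝ) else 0)) / D := by
      rw [Finset.sum_div]
      exact Finset.sum_congr rfl fun e _ => by rw [div_mul_eq_mul_div]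
    rw [hsplit, hsub, core, hdiv]
  -- the bijection
  let E : {a : Epairs n → Bool // a e0 = true} ≃ ({e : Epairs n // e ≠ e0} → Bool) :=
    { toFun := fun a e => a.1 e.1
      invFun := fun a' => ⟨fun e => if h : e = e0 then true else a' ⟨e, h⟩, by simp⟩
      left_inv := by
        intro a
        ext e
        by_cases h : e = e0
        · simp [h, a.2]
        · simp [h]
      right_inv := by
        intro a'
        ext e
        simp [e.2] }
  have hfilter : ∑ a ∈ Finset.univ.filter (fun a : Epairs n → Bool => a e0 = true),
        qexp2q q (-(∑ e : Epairs n, w e * (if a e then (1 : ℝ) else 0)))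
      = ∑ a : {a : Epairs n → Bool // a e0 = true},
        qexp2q q (-(∑ e : Epairs n, w e * (if a.1 e then (1 : ℝ) else 0))) :=
    Finset.sum_subtype _ (fun x => by simp) _
  calc ∑ a ∈ Finset.univ.filter (fun a : Epairs n → Bool => a e0 = true),
        qexp2q q (-(∑ e : Epairs n, w e * (if a e then (1 : ℝ) else 0)))
      = ∑ a : {a : Epairs n → Bool // a e0 = true},
        qexp2q q (-(∑ e : Epairs n, w e * (if a.1 e then (1 : ℝ) else 0))) := hfilter
    _ = ∑ a : {a : Epairs n → Bool // a e0 = true},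
        qexp2q q (-t) * qexp2q q (-(∑ e : {e : Epairs n // e ≠ e0},
            (w e.1 / D) * (if a.1 e.1 then (1 : ℝ) else 0))) := by
        exact Finset.sum_congr rfl fun a _ => main a.1 a.2
    _ = ∑ a' : {e : Epairs n // e ≠ e0} → Bool,
        qexp2q q (-t) * qexp2q q (-(∑ e : {e : Epairs n // e ≠ e0},
            (w e.1 / D) * (if a' e then (1 : ℝ) else 0))) := by
        exact Fintype.sum_equiv E _ _ (fun a => rfl)
    _ = qexp2q q (-t) * ∑ a' : {e : Epairs n // e ≠ e0} → Bool,
        qexp2q q (-(∑ e : {e : Epairs n // e ≠ e0},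
            (w e.1 / D) * (if a' e then (1 : ℝ) else 0))) := by
        rw [Finset.mul_sum]
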